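/- arXiv:2506.06873 — 5 statements merged into one kernel-verified Lean document; each statement's English description precedes it below -/
import Mathlib

section
/- For every y < 0 and every ε ∈ [0,1], the inequality e^y ≤ 1 + y + |y|^(1+ε)/(1+ε) holds. -/
theorem stmt_3 (y ε : ℝ) (hy : y < 0) (hε0 : 0 ≤ ε) (hε1 : ε ≤ 1) :
    Real.exp y ≤ 1 + y + |y| ^ (1 + ε) / (1 + ε) := by
  have hεpos : (0:ℝ) < 1 + ε := by linarith
  set f : ℝ → ℝ := fun s => 1 - s + s ^ (1+ε) / (1+ε) - Real.exp (-s) with hf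
  have hderiv : ∀ x : ℝ, 0 < x →
      HasDerivAt f (x ^ ε - 1 + Real.exp (-x)) x := by
    intro x hx
    have h1 : HasDerivAt (fun s : ℝ => s ^ (1+ε)) ((1+ε) * x ^ ε) x := by
      have := Real.hasDerivAt_rpow_const (x := x) (p := 1+ε) (Or.inl (ne_of_gt hx))
      simpa using this
    have h2 : HasDerivAt (fun s : ℝ => Real.exp (-s)) (-Real.exp (-x)) x := by
      have := (Real.hasDerivAt_exp (-x)).comp x (hasDerivAt_neg x)
      simp [Function.comp_def] at this
      exact this
    have h3 : HasDerivAt f ((0 - 1 + ((1+ε) * x ^ ε) / (1+ε)) - (-Real.exp (-x))) x := by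
      exact (((hasDerivAt_const x (1:ℝ)).sub (hasDerivAt_id x)).add
        (h1.div_const (1+ε))).sub h2
    convert h3 using 1
    field_simp
    ring
  have hcont : ContinuousOn f (Set.Ici 0) := by
    apply ContinuousOn.sub
    apply ContinuousOn.add
    · exact (continuousOn_const.sub continuousOn_id)
    · exact ((Real.continuous_rpow_const (le_of_lt hεpos)).continuousOn.div_const _)
    · exact (Real.continuous_exp.comp continuous_neg).continuousOn
  have hmono : MonotoneOn f (Set.Ici 0) := by
    apply monotoneOn_of_deriv_nonneg (convex_Ici 0) hcont
    · intro x hx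
      rw [interior_Ici] at hx
      exact (hderiv x hx).differentiableAt.differentiableWithinAt
    · intro x hx
      rw [interior_Ici] at hx
      rw [(hderiv x hx).deriv]
      rcases le_or_gt 1 x with h | h
      · have : (1:ℝ) ≤ x ^ ε := by
          calc (1:ℝ) = x ^ (0:ℝ) := by rw [Real.rpow_zero]
          _ ≤ x ^ ε := Real.rpow_le_rpow_of_exponent_le h hε0
        have := Real.exp_pos (-x)
        linarith
      · have h1 : x ^ (1:ℝ) ≤ x ^ ε :=
          Real.rpow_le_rpow_of_exponent_ge hx (le_of_lt h) hε1
        rw [Real.rpow_one] at h1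
        have h2 : 1 - x ≤ Real.exp (-x) := by
          have := Real.add_one_le_exp (-x)
          linarith
        linarith
  have hf0 : f 0 = 0 := by
    simp [hf, Real.zero_rpow (ne_of_gt hεpos)]
  have key : 0 ≤ f (-y) := by
    have := hmono (Set.self_mem_Ici) (by simp [le_of_lt hy] : (-y) ∈ Set.Ici (0:ℝ))
      (by linarith)
    rw [hf0] at this
    exact this
  have habs : |y| = -y := abs_of_neg hy
  rw [habs]
  simp only [hf] at key
  have : Real.exp (-(-y)) = Real.exp y := by ring_nf
  rw [this] at key
  linarith
end

section
/- Let Z be a positive random variable with E[Z^(1+ε)] < ∞ for some ε ∈ [0,1], and let λ < 0. Then E[Z] ≥ (1/λ) log E[e^(λ Z)] ≥ E[Z] − (|λ|^ε/(1+ε)) E[Z^(1+ε)]. -/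
open MeasureTheory

lemma aux_pt (ε : ℝ) (hε0 : 0 ≤ ε) (hε1 : ε ≤ 1) {x : ℝ} (hx : 0 ≤ x) :
    Real.exp (-x) - 1 + x ≤ x ^ (1 + ε) / (1 + ε) := by
  have hε : (0:ℝ) < 1 + ε := by linarith
  set f : ℝ → ℝ := fun y => y ^ (1 + ε) / (1 + ε) - (Real.exp (-y) - 1 + y) with hf
  have hderiv : ∀ y : ℝ, y ≠ 0 → HasDerivAt f (y ^ ε + Real.exp (-y) - 1) y := by
    intro y hy
    have h1 : HasDerivAt (fun y : ℝ => y ^ (1 + ε)) ((1 + ε) * y ^ ε) y := by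
      have := Real.hasDerivAt_rpow_const (x := y) (p := 1 + ε) (Or.inl hy)
      simpa using this
    have h2 : HasDerivAt (fun y : ℝ => Real.exp (-y)) (-Real.exp (-y)) y := by
      have := ((hasDerivAt_neg y).exp)
      simpa using this
    have h3 : HasDerivAt (fun y : ℝ => Real.exp (-y) - 1 + y) (-Real.exp (-y) + 1) y :=
      (h2.sub_const 1).add (hasDerivAt_id y)
    have := (h1.div_const (1 + ε)).sub h3
    have he : (1 + ε) * y ^ ε / (1 + ε) - (-Real.exp (-y) + 1) = y ^ ε + Real.exp (-y) - 1 := by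
      field_simp
      ring
    rw [he] at this
    exact this
  have hd_nonneg : ∀ y : ℝ, 0 < y → 0 ≤ y ^ ε + Real.exp (-y) - 1 := by
    intro y hy
    rcases le_or_gt 1 y with h | h
    · have : (1:ℝ) ≤ y ^ ε := Real.one_le_rpow h hε0
      have := (Real.exp_pos (-y)).le
      linarith
    · have h1 : y ≤ y ^ ε := by
        calc y = y ^ (1:ℝ) := (Real.rpow_one y).symm
        _ ≤ y ^ ε := Real.rpow_le_rpow_of_exponent_ge hy h.le hε1
      have h2 : 1 - y ≤ Real.exp (-y) := by
        have := Real.add_one_le_exp (-y)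
        linarith
      linarith
  have hmono : MonotoneOn f (Set.Ici 0) := by
    apply monotoneOn_of_deriv_nonneg (convex_Ici 0)
    · apply ContinuousOn.sub
      · exact ((Real.continuous_rpow_const hε.le).continuousOn).div_const _
      · fun_prop
    · intro y hy
      rw [interior_Ici] at hy
      exact ((hderiv y (ne_of_gt hy)).differentiableAt).differentiableWithinAt
    · intro y hy
      rw [interior_Ici] at hy
      rw [(hderiv y (ne_of_gt hy)).deriv]
      exact hd_nonneg y hy
  have h0 : f 0 = 0 := by
    simp [hf, Real.zero_rpow (ne_of_gt hε)]
  have := hmono (Set.self_mem_Ici) (Set.mem_Ici.2 hx) hx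
  rw [h0] at this
  simp only [hf] at this
  linarith

open MeasureTheory in
theorem stmt_5 {Ω : Type*} [MeasurableSpace Ω] (μ : Measure Ω) [IsProbabilityMeasure μ]
    (Z : Ω → ℝ) (ε l : ℝ) (hε0 : 0 ≤ ε) (hε1 : ε ≤ 1) (hl : l < 0)
    (hpos : ∀ᵐ ω ∂μ, 0 < Z ω)
    (hint : Integrable Z μ)
    (hint' : Integrable (fun ω => Z ω ^ (1 + ε)) μ) :
    (1 / l) * Real.log (∫ ω, Real.exp (l * Z ω) ∂μ) ≤ ∫ ω, Z ω ∂μ ∧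
    (∫ ω, Z ω ∂μ) - (|l| ^ ε / (1 + ε)) * ∫ ω, Z ω ^ (1 + ε) ∂μ ≤
      (1 / l) * Real.log (∫ ω, Real.exp (l * Z ω) ∂μ) := by
  have hε : (0:ℝ) < 1 + ε := by linarith
  have hlne : l ≠ 0 := hl.ne
  have hl' : 1 / l < 0 := one_div_neg.mpr hl
  have hexp_int : Integrable (fun ω => Real.exp (l * Z ω)) μ := by
    apply Integrable.mono' (integrable_const 1)
    · exact (Real.continuous_exp.comp_aestronglyMeasurable (hint.1.const_mul l))
    · filter_upwards [hpos] with ω hω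
      rw [Real.norm_eq_abs, abs_of_pos (Real.exp_pos _), Real.exp_le_one_iff]
      exact mul_nonpos_of_nonpos_of_nonneg hl.le hω.le
  have hjensen : Real.exp (l * ∫ ω, Z ω ∂μ) ≤ ∫ ω, Real.exp (l * Z ω) ∂μ := by
    have := convexOn_exp.map_integral_le (f := fun ω => l * Z ω) (μ := μ)
      Real.continuous_exp.continuousOn isClosed_univ
      (Filter.Eventually.of_forall fun _ => trivial) (hint.const_mul l) hexp_int
    rwa [integral_const_mul] at this
  have hIpos : 0 < ∫ ω, Real.exp (l * Z ω) ∂μ := lt_of_lt_of_le (Real.exp_pos _) hjensen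
  have h1 : l * ∫ ω, Z ω ∂μ ≤ Real.log (∫ ω, Real.exp (l * Z ω) ∂μ) := by
    calc l * ∫ ω, Z ω ∂μ = Real.log (Real.exp (l * ∫ ω, Z ω ∂μ)) := (Real.log_exp _).symm
    _ ≤ Real.log (∫ ω, Real.exp (l * Z ω) ∂μ) :=
      Real.log_le_log (Real.exp_pos _) hjensen
  constructor
  · have h := mul_le_mul_of_nonpos_left h1 hl'.le
    calc (1 / l) * Real.log (∫ ω, Real.exp (l * Z ω) ∂μ)
        ≤ (1 / l) * (l * ∫ ω, Z ω ∂μ) := h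
      _ = ∫ ω, Z ω ∂μ := by field_simp
  · -- pointwise bound
    have hpt : ∀ᵐ ω ∂μ, Real.exp (l * Z ω) - 1 ≤
        l * Z ω + |l| ^ (1 + ε) * Z ω ^ (1 + ε) / (1 + ε) := by
      filter_upwards [hpos] with ω hω
      have hx : (0:ℝ) ≤ -l * Z ω := by
        have : 0 < -l := neg_pos.mpr hl
        positivity
      have h := aux_pt ε hε0 hε1 hx
      have he1 : -(-l * Z ω) = l * Z ω := by ring
      have he2 : (-l * Z ω) ^ (1 + ε) = |l| ^ (1 + ε) * Z ω ^ (1 + ε) := by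
        rw [Real.mul_rpow (by linarith) hω.le, abs_of_neg hl]
      rw [he1, he2] at h
      linarith
    have hint2 : Integrable
        (fun ω => l * Z ω + |l| ^ (1 + ε) * Z ω ^ (1 + ε) / (1 + ε)) μ :=
      (hint.const_mul l).add ((hint'.const_mul _).div_const _)
    have h2 : (∫ ω, Real.exp (l * Z ω) ∂μ) - 1 ≤
        l * (∫ ω, Z ω ∂μ) + |l| ^ (1 + ε) * (∫ ω, Z ω ^ (1 + ε) ∂μ) / (1 + ε) := by
      have := integral_mono_ae (hexp_int.sub (integrable_const 1)) hint2 hpt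
      simp only [Pi.sub_apply] at this
      rw [integral_sub hexp_int (integrable_const 1), integral_const, probReal_univ,
        smul_eq_mul, one_mul,
        integral_add (hint.const_mul l) ((hint'.const_mul _).div_const _),
        integral_const_mul, integral_div, integral_const_mul] at this
      exact this
    have h3 : Real.log (∫ ω, Real.exp (l * Z ω) ∂μ) ≤
        l * (∫ ω, Z ω ∂μ) + |l| ^ (1 + ε) * (∫ ω, Z ω ^ (1 + ε) ∂μ) / (1 + ε) :=
      (Real.log_le_sub_one_of_pos hIpos).trans (by linarith)
    have h := mul_le_mul_of_nonpos_left h3 hl'.le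
    have habs : |l| ^ (1 + ε) = -l * |l| ^ ε := by
      rw [Real.rpow_add (abs_pos.mpr hlne), Real.rpow_one, abs_of_neg hl]
    calc (∫ ω, Z ω ∂μ) - (|l| ^ ε / (1 + ε)) * ∫ ω, Z ω ^ (1 + ε) ∂μ
        = (1 / l) * (l * (∫ ω, Z ω ∂μ) +
            |l| ^ (1 + ε) * (∫ ω, Z ω ^ (1 + ε) ∂μ) / (1 + ε)) := by
          rw [habs]; field_simp; ring
      _ ≤ (1 / l) * Real.log (∫ ω, Real.exp (l * Z ω) ∂μ) := h
end

section
/- Let Z₁,…,Z_n be i.i.d. copies of a positive random variable Z, and λ < 0. Then E[(1/λ) log((1/n)Σᵢ e^{λZᵢ})] ≤ E[Z] − ((n−1)/(2n|λ|)) Var(e^{λZ}). (Lower bound on the bias of the LSE estimator relative to the true mean.) -/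
open MeasureTheory ProbabilityTheory

lemma concaveAux14 : ConcaveOn ℝ (Set.Ioc (0:ℝ) 1) (fun x => Real.log x + x^2/2) := by
  have hder : ∀ x ∈ Set.Ioi (0:ℝ), HasDerivAt (fun x : ℝ => Real.log x + x^2/2) (x⁻¹ + x) x := by
    intro x hx
    have h1 := Real.hasDerivAt_log (ne_of_gt hx)
    have h2 : HasDerivAt (fun x : ℝ => x^2/2) x x := by
      have := (hasDerivAt_pow 2 x).div_const 2
      simpa using this
    exact h1.add h2
  have hint : interior (Set.Ioc (0:ℝ) 1) = Set.Ioo (0:ℝ) 1 := interior_Ioc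
  apply AntitoneOn.concaveOn_of_deriv (convex_Ioc 0 1)
  · apply ContinuousOn.add
    · exact Real.continuousOn_log.mono (by intro x hx; exact ne_of_gt hx.1)
    · fun_prop
  · rw [hint]
    intro x hx
    exact ((hder x hx.1).differentiableAt).differentiableWithinAt
  · rw [hint]
    intro x hx y hy hxy
    rw [(hder x hx.1).deriv, (hder y hy.1).deriv]
    have hx0 := hx.1; have hx1 := hx.2; have hy0 := hy.1; have hy1 := hy.2
    have hxy0 : 0 < x * y := mul_pos hx0 hy0
    rw [← sub_nonneg]
    have key : x⁻¹ + x - (y⁻¹ + y) = (y - x) * (1 - x*y) / (x*y) := by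
      field_simp
      ring
    rw [key]
    apply div_nonneg _ (le_of_lt hxy0)
    apply mul_nonneg (by linarith) (by nlinarith)

open MeasureTheory ProbabilityTheory in
theorem stmt_14 {Ω : Type*} [MeasurableSpace Ω] (μ : Measure Ω) [IsProbabilityMeasure μ]
    (n : ℕ) (hn : 0 < n) (Z : Fin n → Ω → ℝ) (Z0 : Ω → ℝ) (l : ℝ) (hl : l < 0)
    (hmeas : ∀ i, Measurable (Z i))
    (hindep : iIndepFun Z μ)
    (hid : ∀ i, IdentDistrib (Z i) Z0 μ μ)
    (hpos : ∀ᵐ ω ∂μ, 0 < Z0 ω)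
    (hint : Integrable Z0 μ) :
    ∫ ω, (1 / l) * Real.log ((1 / (n : ℝ)) * ∑ i, Real.exp (l * Z i ω)) ∂μ ≤
      (∫ ω, Z0 ω ∂μ) -
        (((n : ℝ) - 1) / (2 * n * |l|)) * variance (fun ω => Real.exp (l * Z0 ω)) μ := by
  classical
  have hl0 : l ≠ 0 := ne_of_lt hl
  have hnR : (0:ℝ) < n := by exact_mod_cast hn
  have hnR0 : (n:ℝ) ≠ 0 := ne_of_gt hnR
  have hnonempty : Nonempty (Fin n) := ⟨⟨0, hn⟩⟩
  have hem : Measurable (fun x : ℝ => Real.exp (l * x)) :=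
    Real.measurable_exp.comp (measurable_const_mul l)
  have hem2 : Measurable (fun x : ℝ => (Real.exp (l * x))^2) := hem.pow_const 2
  -- a.e. positivity of each Z i
  have hposZ : ∀ i, ∀ᵐ ω ∂μ, 0 < Z i ω := by
    intro i
    have h0 : μ (Z0 ⁻¹' Set.Iic 0) = 0 := by
      have := ae_iff.mp hpos
      simpa [Set.preimage, not_lt] using this
    have heq := (hid i).measure_mem_eq (measurableSet_Iic (a := (0:ℝ)))
    rw [ae_iff]
    have : {ω | ¬ 0 < Z i ω} = Z i ⁻¹' Set.Iic 0 := by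
      ext ω; simp [not_lt]
    rw [this, heq, h0]
  have hposall : ∀ᵐ ω ∂μ, ∀ i, 0 < Z i ω := ae_all_iff.2 hposZ
  -- pointwise key inequality
  have key : ∀ ω, (∀ i, 0 < Z i ω) →
      l * ((1/(n:ℝ)) * ∑ i, Z i ω) + (1/(n:ℝ)) * ∑ i, (Real.exp (l * Z i ω))^2/2
        - ((1/(n:ℝ)) * ∑ i, Real.exp (l * Z i ω))^2/2
      ≤ Real.log ((1/(n:ℝ)) * ∑ i, Real.exp (l * Z i ω)) := by
    intro ω hω
    have hmem : ∀ i : Fin n, i ∈ Finset.univ → Real.exp (l * Z i ω) ∈ Set.Ioc (0:ℝ) 1 := by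
      intro i _
      refine ⟨Real.exp_pos _, ?_⟩
      exact Real.exp_le_one_iff.2 (le_of_lt (mul_neg_of_neg_of_pos hl (hω i)))
    have hw : ∀ i : Fin n, i ∈ Finset.univ → (0:ℝ) ≤ 1/(n:ℝ) := by
      intro i _; positivity
    have hw1 : ∑ _i : Fin n, (1/(n:ℝ)) = 1 := by
      rw [Finset.sum_const, Finset.card_univ, Fintype.card_fin, nsmul_eq_mul]
      field_simp
    have hj := concaveAux14.le_map_sum hw hw1 hmem
    simp only [smul_eq_mul, Real.log_exp] at hj
    simp only [← Finset.mul_sum] at hj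
    have e1 : (1/(n:ℝ)) * ∑ i, (l * Z i ω + (Real.exp (l * Z i ω))^2/2)
        = l * ((1/(n:ℝ)) * ∑ i, Z i ω) + (1/(n:ℝ)) * ∑ i, (Real.exp (l * Z i ω))^2/2 := by
      rw [Finset.sum_add_distrib, mul_add]
      congr 1
      rw [show ∑ i, l * Z i ω = l * ∑ i, Z i ω from (Finset.mul_sum _ _ _).symm]
      ring
    rw [e1] at hj
    linarith
  -- basic integrability
  have hZint : ∀ i, Integrable (Z i) μ := fun i => (hid i).integrable_iff.2 hint
  have hmX : ∀ i, Measurable fun ω => Real.exp (l * Z i ω) := fun i => hem.comp (hmeas i)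
  have hXbd : ∀ i, ∀ᵐ ω ∂μ, ‖Real.exp (l * Z i ω)‖ ≤ 1 := by
    intro i
    filter_upwards [hposZ i] with ω hω
    rw [Real.norm_eq_abs, Real.abs_exp]
    exact Real.exp_le_one_iff.2 (le_of_lt (mul_neg_of_neg_of_pos hl hω))
  have hXint : ∀ i, Integrable (fun ω => Real.exp (l * Z i ω)) μ := by
    intro i
    exact Integrable.mono' (integrable_const 1) (hmX i).aestronglyMeasurable (hXbd i)
  have hX2int : ∀ i, Integrable (fun ω => (Real.exp (l * Z i ω))^2) μ := by
    intro i
    apply Integrable.mono' (integrable_const 1) ((hmX i).pow_const 2).aestronglyMeasurable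
    filter_upwards [hXbd i] with ω hω
    rw [norm_pow]
    exact pow_le_one₀ (norm_nonneg _) hω
  have hXXint : ∀ i j, Integrable (fun ω => Real.exp (l * Z i ω) * Real.exp (l * Z j ω)) μ := by
    intro i j
    apply Integrable.mono' (integrable_const 1) ((hmX i).mul (hmX j)).aestronglyMeasurable
    filter_upwards [hXbd i, hXbd j] with ω h1 h2
    rw [Pi.mul_apply, norm_mul]
    exact mul_le_one₀ h1 (norm_nonneg _) h2
  -- the sample mean S
  have hmS : Measurable fun ω => (1/(n:ℝ)) * ∑ i, Real.exp (l * Z i ω) :=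
    (Finset.univ.measurable_sum (fun i _ => hmX i)).const_mul _
  have hSmem : ∀ᵐ ω ∂μ, (1/(n:ℝ)) * ∑ i, Real.exp (l * Z i ω) ∈ Set.Ioc (0:ℝ) 1 := by
    filter_upwards [hposall] with ω hω
    constructor
    · apply mul_pos (by positivity)
      exact Finset.sum_pos (fun i _ => Real.exp_pos _) Finset.univ_nonempty
    · have hle : ∑ i, Real.exp (l * Z i ω) ≤ (n:ℝ) := by
        calc ∑ i, Real.exp (l * Z i ω) ≤ ∑ _i : Fin n, (1:ℝ) := by
              apply Finset.sum_le_sum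
              intro i _
              exact Real.exp_le_one_iff.2 (le_of_lt (mul_neg_of_neg_of_pos hl (hω i)))
          _ = (n:ℝ) := by simp
      calc (1/(n:ℝ)) * ∑ i, Real.exp (l * Z i ω) ≤ (1/(n:ℝ)) * (n:ℝ) :=
            mul_le_mul_of_nonneg_left hle (by positivity)
        _ = 1 := by field_simp
  have hS2int : Integrable (fun ω => ((1/(n:ℝ)) * ∑ i, Real.exp (l * Z i ω))^2) μ := by
    apply Integrable.mono' (integrable_const 1) (hmS.pow_const 2).aestronglyMeasurable
    filter_upwards [hSmem] with ω hω
    rw [norm_pow, Real.norm_eq_abs, abs_of_pos hω.1]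
    exact pow_le_one₀ (le_of_lt hω.1) hω.2
  -- integrability of the three pieces of g
  have hg1 : Integrable (fun ω => l * ((1/(n:ℝ)) * ∑ i, Z i ω)) μ :=
    ((integrable_finset_sum _ (fun i _ => hZint i)).const_mul _).const_mul l
  have hg2 : Integrable (fun ω => (1/(n:ℝ)) * ∑ i, (Real.exp (l * Z i ω))^2/2) μ :=
    (integrable_finset_sum _ (fun i _ => (hX2int i).div_const 2)).const_mul _
  have hg3 : Integrable (fun ω => ((1/(n:ℝ)) * ∑ i, Real.exp (l * Z i ω))^2/2) μ :=
    hS2int.div_const 2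
  -- integrability of log S
  have hlogint : Integrable (fun ω => Real.log ((1/(n:ℝ)) * ∑ i, Real.exp (l * Z i ω))) μ := by
    apply Integrable.mono'
      (g := fun ω => -(l * ((1/(n:ℝ)) * ∑ i, Z i ω)) + 1)
      (hg1.neg.add (integrable_const 1))
      hmS.log.aestronglyMeasurable
    filter_upwards [hposall, hSmem] with ω hω hS
    have hk := key ω hω
    have hlogle : Real.log ((1/(n:ℝ)) * ∑ i, Real.exp (l * Z i ω)) ≤ 0 :=
      Real.log_nonpos (le_of_lt hS.1) hS.2
    rw [Real.norm_eq_abs, abs_of_nonpos hlogle]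
    have hsq : ((1/(n:ℝ)) * ∑ i, Real.exp (l * Z i ω))^2 ≤ 1 :=
      pow_le_one₀ (le_of_lt hS.1) hS.2
    have hsum2 : 0 ≤ ∑ i, (Real.exp (l * Z i ω))^2/2 :=
      Finset.sum_nonneg (fun i _ => by positivity)
    nlinarith [mul_nonneg (show (0:ℝ) ≤ 1/(n:ℝ) by positivity) hsum2]
  set A := ∫ ω, (Real.exp (l * Z0 ω))^2 ∂μ with hA
  set B := ∫ ω, Real.exp (l * Z0 ω) ∂μ with hB
  set EZ := ∫ ω, Z0 ω ∂μ with hEZ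
  have hIZ : ∀ i, ∫ ω, Z i ω ∂μ = EZ := fun i => (hid i).integral_eq
  have hIX : ∀ i, ∫ ω, Real.exp (l * Z i ω) ∂μ = B := fun i => ((hid i).comp hem).integral_eq
  have hIX2 : ∀ i, ∫ ω, (Real.exp (l * Z i ω))^2 ∂μ = A := fun i => ((hid i).comp hem2).integral_eq
  have hprod : ∀ i j : Fin n, i ≠ j →
      ∫ ω, Real.exp (l * Z i ω) * Real.exp (l * Z j ω) ∂μ = B * B := by
    intro i j hij
    have hind : IndepFun (fun ω => Real.exp (l * Z i ω)) (fun ω => Real.exp (l * Z j ω)) μ :=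
      (hindep.indepFun hij).comp hem hem
    have h := hind.integral_mul_eq_mul_integral (hXint i).1 (hXint j).1
    rw [hIX i, hIX j] at h
    exact h
  have hrow : ∀ i : Fin n, ∑ j, (∫ ω, Real.exp (l * Z i ω) * Real.exp (l * Z j ω) ∂μ)
      = A + ((n:ℝ)-1) * (B * B) := by
    intro i
    rw [← Finset.add_sum_erase _ _ (Finset.mem_univ i)]
    congr 1
    · rw [← hIX2 i]
      apply integral_congr_ae
      filter_upwards with ω
      rw [sq]
    · rw [Finset.sum_congr rfl (fun j hj => hprod i j (Ne.symm (Finset.ne_of_mem_erase hj))),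
        Finset.sum_const, Finset.card_erase_of_mem (Finset.mem_univ i), Finset.card_univ,
        Fintype.card_fin, nsmul_eq_mul, Nat.cast_sub hn, Nat.cast_one]
  have hS2 : ∫ ω, ((1/(n:ℝ)) * ∑ i, Real.exp (l * Z i ω))^2 ∂μ
      = (1/(n:ℝ)) * A + (((n:ℝ)-1)/n) * (B * B) := by
    have hpt : (fun ω => ((1/(n:ℝ)) * ∑ i, Real.exp (l * Z i ω))^2)
        = fun ω => (1/(n:ℝ))^2 * ∑ i, ∑ j, Real.exp (l * Z i ω) * Real.exp (l * Z j ω) := by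
      funext ω
      rw [mul_pow, sq (∑ i, Real.exp (l * Z i ω)), Finset.sum_mul_sum]
    rw [hpt, integral_const_mul,
      integral_finset_sum _ (fun i _ => integrable_finset_sum _ (fun j _ => hXXint i j))]
    rw [Finset.sum_congr rfl (fun i _ => by
      rw [integral_finset_sum _ (fun j _ => hXXint i j), hrow i])]
    rw [Finset.sum_const, Finset.card_univ, Fintype.card_fin, nsmul_eq_mul]
    field_simp
  have hgeq : ∫ ω, (l * ((1/(n:ℝ)) * ∑ i, Z i ω) + (1/(n:ℝ)) * ∑ i, (Real.exp (l * Z i ω))^2/2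
      - ((1/(n:ℝ)) * ∑ i, Real.exp (l * Z i ω))^2/2) ∂μ
      = l * EZ + A/2 - ((1/(n:ℝ)) * A + (((n:ℝ)-1)/n) * (B * B))/2 := by
    have hg12 : Integrable (fun ω => l * ((1/(n:ℝ)) * ∑ i, Z i ω)
        + (1/(n:ℝ)) * ∑ i, (Real.exp (l * Z i ω))^2/2) μ := hg1.add hg2
    rw [integral_sub hg12 hg3, integral_add hg1 hg2]
    congr 1
    · congr 1
      · rw [integral_const_mul, integral_const_mul,
          integral_finset_sum _ (fun i _ => hZint i),
          Finset.sum_congr rfl (fun i _ => hIZ i), Finset.sum_const, Finset.card_univ,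
          Fintype.card_fin, nsmul_eq_mul]
        field_simp
        try ring
      · rw [integral_const_mul, integral_finset_sum _ (fun i _ => (hX2int i).div_const 2),
          Finset.sum_congr rfl (fun i _ => by rw [integral_div, hIX2 i]),
          Finset.sum_const, Finset.card_univ, Fintype.card_fin, nsmul_eq_mul]
        field_simp
    · rw [integral_div, hS2]
  have hmain : l * EZ + A/2 - ((1/(n:ℝ)) * A + (((n:ℝ)-1)/n) * (B * B))/2
      ≤ ∫ ω, Real.log ((1/(n:ℝ)) * ∑ i, Real.exp (l * Z i ω)) ∂μ := by
    rw [← hgeq]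
    apply integral_mono_ae ((hg1.add hg2).sub hg3) hlogint
    filter_upwards [hposall] with ω hω using key ω hω
  have hX0mem : MemLp (fun ω => Real.exp (l * Z0 ω)) 2 μ := by
    apply MemLp.of_bound (C := 1)
      (hem.comp_aemeasurable hint.aemeasurable).aestronglyMeasurable
    filter_upwards [hpos] with ω hω
    simp only [Function.comp_apply, Real.norm_eq_abs, Real.abs_exp]
    exact Real.exp_le_one_iff.2 (le_of_lt (mul_neg_of_neg_of_pos hl hω))
  have hvar : variance (fun ω => Real.exp (l * Z0 ω)) μ = A - B * B := by
    rw [variance_eq_sub hX0mem]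
    simp only [Pi.pow_apply]
    rw [← hA, ← hB, sq]
  have habs : |l| = -l := abs_of_neg hl
  rw [integral_const_mul, hvar]
  have hfin : l * (EZ - (((n:ℝ)-1)/(2*(n:ℝ)*|l|)) * (A - B*B))
      = l * EZ + A/2 - ((1/(n:ℝ)) * A + (((n:ℝ)-1)/n) * (B * B))/2 := by
    rw [habs]
    have hln : -l ≠ 0 := neg_ne_zero.2 hl0
    field_simp
    ring
  have h2 : l * (EZ - (((n:ℝ)-1)/(2*(n:ℝ)*|l|)) * (A - B*B))
      ≤ ∫ ω, Real.log ((1/(n:ℝ)) * ∑ i, Real.exp (l * Z i ω)) ∂μ := by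
    rw [hfin]; exact hmain
  have h3 := mul_le_mul_of_nonpos_left h2 (le_of_lt (one_div_neg.2 hl))
  calc (1/l) * ∫ ω, Real.log ((1/(n:ℝ)) * ∑ i, Real.exp (l * Z i ω)) ∂μ
      ≤ (1/l) * (l * (EZ - (((n:ℝ)-1)/(2*(n:ℝ)*|l|)) * (A - B*B))) := h3
    _ = EZ - (((n:ℝ)-1)/(2*(n:ℝ)*|l|)) * (A - B*B) := by
        rw [← mul_assoc, one_div_mul_cancel hl0, one_mul]
end

section
/- Let Z₁,…,Z_n be i.i.d. copies of a positive random variable Z with E[Z^(1+ε)] ≤ ν for some ε ∈ [0,1], and λ < 0. Then E[(1/λ) log((1/n)Σᵢ e^{λZᵢ})] ≥ E[Z] − (|λ|^ε/(1+ε)) ν − (1/(2n|λ|)) Var(e^{λZ}). (Upper bound on the bias of the LSE estimator.) -/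
open MeasureTheory ProbabilityTheory

lemma expA {ε : ℝ} (hε0 : 0 ≤ ε) (hε1 : ε ≤ 1) {x : ℝ} (hx : x ≤ 0) :
    Real.exp x ≤ 1 + x + (-x) ^ (1 + ε) / (1 + ε) := by
  have hεp : (0:ℝ) < 1 + ε := by linarith
  rcases hx.eq_or_lt with rfl | hx'
  · simp [Real.zero_rpow (by positivity : (1:ℝ) + ε ≠ 0)]
  · set h : ℝ → ℝ := fun t => 1 + t + (-t) ^ (1 + ε) / (1 + ε) - Real.exp t with hh
    have hc : Continuous h := by
      have : Continuous fun t : ℝ => (-t) ^ (1 + ε) :=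
        (Real.continuous_rpow_const (by positivity)).comp continuous_neg
      exact ((continuous_const.add continuous_id).add (this.div_const _)).sub Real.continuous_exp
    have hder : ∀ t ∈ Set.Ioo x 0, HasDerivAt h (1 - (-t) ^ ε - Real.exp t) t := by
      intro t ht
      have htneg : 0 < -t := by linarith [ht.2]
      have H1 : HasDerivAt (fun s : ℝ => (-s) ^ (1 + ε)) (-((1 + ε) * (-t) ^ ε)) t := by
        have := (Real.hasDerivAt_rpow_const (x := -t) (p := 1 + ε)
          (Or.inl htneg.ne')).comp t (hasDerivAt_neg t)
        refine this.congr_deriv ?_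
        rw [show (1:ℝ) + ε - 1 = ε by ring]
        ring
      have H : HasDerivAt h (0 + 1 + (-((1 + ε) * (-t) ^ ε)) / (1 + ε) - Real.exp t) t :=
        (((hasDerivAt_const t (1:ℝ)).add (hasDerivAt_id t)).add (H1.div_const _)).sub
          (Real.hasDerivAt_exp t)
      convert H using 1
      field_simp
      ring
    have hanti : AntitoneOn h (Set.Icc x 0) := by
      apply antitoneOn_of_deriv_nonpos (convex_Icc x 0) hc.continuousOn
      · intro t ht
        rw [interior_Icc] at ht
        exact ((hder t ht).differentiableAt).differentiableWithinAt
      · intro t ht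
        rw [interior_Icc] at ht
        rw [(hder t ht).deriv]
        have htneg : 0 < -t := by linarith [ht.2]
        have hkey : 1 - Real.exp t ≤ (-t) ^ ε := by
          rcases le_total (-t) 1 with h1 | h1
          · have h2 : (-t) ^ (1:ℝ) ≤ (-t) ^ ε :=
              Real.rpow_le_rpow_of_exponent_ge htneg h1 hε1
            rw [Real.rpow_one] at h2
            have := Real.add_one_le_exp t
            linarith
          · have h2 : (1:ℝ) ≤ (-t) ^ ε := Real.one_le_rpow h1 hε0
            linarith [Real.exp_pos t]
        linarith
    have h0 : h 0 = 0 := by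
      simp [hh, Real.zero_rpow (by positivity : (1:ℝ) + ε ≠ 0)]
    have := hanti (Set.left_mem_Icc.mpr hx) (Set.right_mem_Icc.mpr hx) hx
    rw [h0] at this
    simp only [hh] at this
    linarith

open MeasureTheory ProbabilityTheory in
theorem stmt_15 {Ω : Type*} [MeasurableSpace Ω] (μ : Measure Ω) [IsProbabilityMeasure μ]
    (n : ℕ) (hn : 0 < n) (Z : Fin n → Ω → ℝ) (Z0 : Ω → ℝ) (l ε ν : ℝ) (hl : l < 0)
    (hε0 : 0 ≤ ε) (hε1 : ε ≤ 1)
    (hmeas : ∀ i, Measurable (Z i))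
    (hindep : iIndepFun Z μ)
    (hid : ∀ i, IdentDistrib (Z i) Z0 μ μ)
    (hpos : ∀ᵐ ω ∂μ, 0 < Z0 ω)
    (hint : Integrable Z0 μ)
    (hint' : Integrable (fun ω => Z0 ω ^ (1 + ε)) μ)
    (hmom : ∫ ω, Z0 ω ^ (1 + ε) ∂μ ≤ ν) :
    (∫ ω, Z0 ω ∂μ) - (|l| ^ ε / (1 + ε)) * ν -
        (1 / (2 * n * |l|)) * variance (fun ω => Real.exp (l * Z0 ω)) μ ≤
      ∫ ω, (1 / l) * Real.log ((1 / (n : ℝ)) * ∑ i, Real.exp (l * Z i ω)) ∂μ := by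
  have i0 : Fin n := ⟨0, hn⟩
  have hnn : (0:ℝ) < (n:ℝ) := by exact_mod_cast hn
  have hεp : (0:ℝ) < 1 + ε := by linarith
  have hlabs : 0 < |l| := abs_pos.mpr hl.ne
  -- a.e. positivity of each Z i
  have hposi : ∀ i, ∀ᵐ ω ∂μ, 0 < Z i ω := fun i =>
    (hid i).symm.ae_snd (p := fun x => 0 < x) measurableSet_Ioi hpos
  have hae : ∀ᵐ ω ∂μ, ∀ i, 0 < Z i ω := MeasureTheory.ae_all_iff.mpr hposi
  -- integrability of exponentials
  have hEmeas : ∀ i, Measurable fun ω => Real.exp (l * Z i ω) := fun i =>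
    Real.measurable_exp.comp ((hmeas i).const_mul l)
  have hEint : ∀ i, Integrable (fun ω => Real.exp (l * Z i ω)) μ := by
    intro i
    apply Integrable.mono' (integrable_const 1) (hEmeas i).aestronglyMeasurable
    filter_upwards [hposi i] with ω hω
    rw [Real.norm_eq_abs, abs_of_pos (Real.exp_pos _)]
    exact Real.exp_le_one_iff.mpr (by nlinarith)
  have hu : Measurable fun x : ℝ => Real.exp (l * x) :=
    Real.measurable_exp.comp (measurable_id.const_mul l)
  have hidE : ∀ i, IdentDistrib (fun ω => Real.exp (l * Z i ω))
      (fun ω => Real.exp (l * Z0 ω)) μ μ := fun i => (hid i).comp hu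
  have hEint0 : Integrable (fun ω => Real.exp (l * Z0 ω)) μ :=
    (hidE i0).integrable_iff.mp (hEint i0)
  have hEeq : ∀ i, ∫ ω, Real.exp (l * Z i ω) ∂μ = ∫ ω, Real.exp (l * Z0 ω) ∂μ := fun i =>
    (hidE i).integral_eq
  set m : ℝ := ∫ ω, Real.exp (l * Z0 ω) ∂μ with hm_def
  have hm : 0 < m := by
    rw [hm_def, integral_pos_iff_support_of_nonneg_ae
      (Filter.Eventually.of_forall fun ω => (Real.exp_pos _).le) hEint0]
    have : Function.support (fun ω => Real.exp (l * Z0 ω)) = Set.univ :=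
      Set.eq_univ_of_forall fun ω => (Real.exp_pos _).ne'
    simp [this]
  -- Y and its properties
  have hYpos : ∀ ω, 0 < (1 / (n:ℝ)) * ∑ i, Real.exp (l * Z i ω) := by
    intro ω
    have : Nonempty (Fin n) := ⟨i0⟩
    have hs : 0 < ∑ i, Real.exp (l * Z i ω) :=
      Finset.sum_pos (fun i _ => Real.exp_pos _) Finset.univ_nonempty
    positivity
  have hYmeas : Measurable fun ω => (1 / (n:ℝ)) * ∑ i, Real.exp (l * Z i ω) :=
    (Finset.measurable_sum _ fun i _ => hEmeas i).const_mul _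
  have hYint : Integrable (fun ω => (1 / (n:ℝ)) * ∑ i, Real.exp (l * Z i ω)) μ :=
    (integrable_finset_sum _ fun i _ => hEint i).const_mul _
  have hYval : ∫ ω, (1 / (n:ℝ)) * ∑ i, Real.exp (l * Z i ω) ∂μ = m := by
    rw [MeasureTheory.integral_const_mul, MeasureTheory.integral_finset_sum _
      (fun i _ => hEint i)]
    simp only [hEeq]
    rw [Finset.sum_const, Finset.card_univ, Fintype.card_fin, nsmul_eq_mul]
    field_simp
  -- integrability of log Y
  have hZi0int : Integrable (Z i0) μ := (hid i0).integrable_iff.mpr hint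
  have hlogint : Integrable (fun ω => Real.log ((1 / (n:ℝ)) * ∑ i, Real.exp (l * Z i ω))) μ := by
    apply Integrable.mono' (g := fun ω => Real.log n + |l| * Z i0 ω)
      ((integrable_const _).add (hZi0int.const_mul _)) (hYmeas.log.aestronglyMeasurable)
    filter_upwards [hae] with ω hω
    set Yω := (1 / (n:ℝ)) * ∑ i, Real.exp (l * Z i ω) with hYω
    have hY1 : Yω ≤ 1 := by
      have hsum : ∑ i, Real.exp (l * Z i ω) ≤ ∑ _i : Fin n, (1:ℝ) := by
        apply Finset.sum_le_sum
        intro i _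
        exact Real.exp_le_one_iff.mpr (by nlinarith [hω i])
      rw [hYω]
      calc (1 / (n:ℝ)) * ∑ i, Real.exp (l * Z i ω) ≤ (1 / (n:ℝ)) * ∑ _i : Fin n, (1:ℝ) := by
            apply mul_le_mul_of_nonneg_left hsum (by positivity)
        _ = 1 := by rw [Finset.sum_const, Finset.card_univ, Fintype.card_fin, nsmul_eq_mul]
                    field_simp
    have hYlb : (1 / (n:ℝ)) * Real.exp (l * Z i0 ω) ≤ Yω := by
      rw [hYω]
      apply mul_le_mul_of_nonneg_left _ (by positivity)
      exact Finset.single_le_sum (f := fun i => Real.exp (l * Z i ω))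
        (fun i _ => (Real.exp_pos _).le) (Finset.mem_univ i0)
    have hlb : Real.log ((1 / (n:ℝ)) * Real.exp (l * Z i0 ω)) ≤ Real.log Yω :=
      Real.log_le_log (by positivity) hYlb
    rw [Real.log_mul (by positivity) (Real.exp_ne_zero _), Real.log_exp, one_div,
      Real.log_inv] at hlb
    have hlogn : 0 ≤ Real.log n := Real.log_nonneg (by exact_mod_cast hn)
    rw [Real.norm_eq_abs, abs_of_nonpos (Real.log_nonpos (hYpos ω).le hY1)]
    have habsl : |l| = -l := abs_of_neg hl
    rw [habsl]
    linarith
  -- Jensen: exp(∫ log Y) ≤ ∫ Y = m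
  have hgi : Integrable (Real.exp ∘ fun ω => Real.log ((1 / (n:ℝ)) *
      ∑ i, Real.exp (l * Z i ω))) μ := by
    have : (Real.exp ∘ fun ω => Real.log ((1 / (n:ℝ)) * ∑ i, Real.exp (l * Z i ω)))
        = fun ω => (1 / (n:ℝ)) * ∑ i, Real.exp (l * Z i ω) :=
      funext fun ω => Real.exp_log (hYpos ω)
    rw [this]; exact hYint
  have hJ : Real.exp (∫ ω, Real.log ((1 / (n:ℝ)) * ∑ i, Real.exp (l * Z i ω)) ∂μ) ≤ m := by
    have h2 := convexOn_exp.map_integral_le Real.continuous_exp.continuousOn isClosed_univ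
      (Filter.Eventually.of_forall fun ω => Set.mem_univ _) hlogint hgi
    calc Real.exp (∫ ω, Real.log ((1 / (n:ℝ)) * ∑ i, Real.exp (l * Z i ω)) ∂μ)
        ≤ ∫ ω, Real.exp (Real.log ((1 / (n:ℝ)) * ∑ i, Real.exp (l * Z i ω))) ∂μ := h2
      _ = ∫ ω, (1 / (n:ℝ)) * ∑ i, Real.exp (l * Z i ω) ∂μ := by
          congr 1; exact funext fun ω => Real.exp_log (hYpos ω)
      _ = m := hYval
  have hlogle : ∫ ω, Real.log ((1 / (n:ℝ)) * ∑ i, Real.exp (l * Z i ω)) ∂μ ≤ Real.log m :=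
    (Real.le_log_iff_exp_le hm).mpr hJ
  -- bound on m
  set A : ℝ := ∫ ω, Z0 ω ∂μ with hA
  set B : ℝ := ∫ ω, Z0 ω ^ (1 + ε) ∂μ with hB
  have hmle : m ≤ 1 + l * A + |l| ^ (1 + ε) / (1 + ε) * B := by
    have hint2 : Integrable (fun ω => 1 + l * Z0 ω + |l| ^ (1 + ε) / (1 + ε) * Z0 ω ^ (1 + ε)) μ :=
      ((integrable_const 1).add (hint.const_mul l)).add (hint'.const_mul _)
    have hptw : ∀ᵐ ω ∂μ, Real.exp (l * Z0 ω) ≤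
        1 + l * Z0 ω + |l| ^ (1 + ε) / (1 + ε) * Z0 ω ^ (1 + ε) := by
      filter_upwards [hpos] with ω hω
      have hx : l * Z0 ω ≤ 0 := by nlinarith
      have hb := expA hε0 hε1 hx
      have hsub : (-(l * Z0 ω)) = |l| * Z0 ω := by rw [abs_of_neg hl]; ring
      rw [hsub, Real.mul_rpow (abs_nonneg l) hω.le] at hb
      have e : |l| ^ (1 + ε) / (1 + ε) * Z0 ω ^ (1 + ε)
          = |l| ^ (1 + ε) * Z0 ω ^ (1 + ε) / (1 + ε) := by ring
      rw [e]
      linarith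
    calc m ≤ ∫ ω, (1 + l * Z0 ω + |l| ^ (1 + ε) / (1 + ε) * Z0 ω ^ (1 + ε)) ∂μ :=
          integral_mono_ae hEint0 hint2 hptw
      _ = 1 + l * A + |l| ^ (1 + ε) / (1 + ε) * B := by
          have hint2a : Integrable (fun ω => 1 + l * Z0 ω) μ :=
            (integrable_const 1).add (hint.const_mul l)
          have hlz : Integrable (fun ω => l * Z0 ω) μ := hint.const_mul l
          rw [integral_add hint2a (hint'.const_mul _),
            integral_add (integrable_const 1) hlz,
            MeasureTheory.integral_const_mul, MeasureTheory.integral_const_mul,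
            integral_const]
          simp [hA, hB]
  -- put everything together
  have habs2 : |l| ^ ((1:ℝ) + ε) = -l * |l| ^ ε := by
    rw [Real.rpow_add hlabs, Real.rpow_one, abs_of_neg hl]
  have hllt : 1 / l < 0 := one_div_neg.mpr hl
  have key : A - |l| ^ ε / (1 + ε) * ν ≤
      ∫ ω, (1 / l) * Real.log ((1 / (n:ℝ)) * ∑ i, Real.exp (l * Z i ω)) ∂μ := by
    rw [MeasureTheory.integral_const_mul]
    have h1 : (1 / l) * Real.log m ≤
        (1 / l) * ∫ ω, Real.log ((1 / (n:ℝ)) * ∑ i, Real.exp (l * Z i ω)) ∂μ :=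
      mul_le_mul_of_nonpos_left hlogle hllt.le
    refine le_trans ?_ h1
    have h2 : Real.log m ≤ m - 1 := Real.log_le_sub_one_of_pos hm
    have h3 : Real.log m ≤ l * (A - |l| ^ ε / (1 + ε) * B) := by
      have e : l * (A - |l| ^ ε / (1 + ε) * B) = l * A + |l| ^ (1 + ε) / (1 + ε) * B := by
        rw [habs2]; ring
      rw [e]; linarith
    have h4 := mul_le_mul_of_nonpos_left h3 hllt.le
    have h5 : (1 / l) * (l * (A - |l| ^ ε / (1 + ε) * B))
        = A - |l| ^ ε / (1 + ε) * B := by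
      rw [← mul_assoc, one_div_mul_cancel hl.ne, one_mul]
    rw [h5] at h4
    have h6 : |l| ^ ε / (1 + ε) * B ≤ |l| ^ ε / (1 + ε) * ν :=
      mul_le_mul_of_nonneg_left hmom (by positivity)
    linarith
  have hvar : 0 ≤ variance (fun ω => Real.exp (l * Z0 ω)) μ := variance_nonneg _ _
  have hcoef : (0:ℝ) ≤ 1 / (2 * n * |l|) := by positivity
  nlinarith [mul_nonneg hcoef hvar]
end

section
/- For probability measures P₁, P₂ on a measurable space and a measurable function g with 0 < g ≤ 1 and λ < 0 such that g = e^{λ f} for a nonnegative function f, the difference of the log-partition functionals satisfies (1/λ) log E_{P₁}[e^{λ f}] − (1/λ) log E_{P₂}[e^{λ f}] ≤ TV(P₁,P₂)/(|λ| min(E_{P₁}[e^{λf}], E_{P₂}[e^{λf}])), where TV is the total variation distance. -/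
open MeasureTheory Real

lemma log_sub_log_le_abs_div_min {x y : ℝ} (hx : 0 < x) (hy : 0 < y) :
    Real.log x - Real.log y ≤ |x - y| / min x y := by
  rcases le_total y x with h | h
  · have hmin : min x y = y := min_eq_right h
    have habs : |x - y| = x - y := abs_of_nonneg (by linarith)
    rw [hmin, habs, ← Real.log_div hx.ne' hy.ne']
    have := Real.log_le_sub_one_of_pos (div_pos hx hy)
    have h2 : x / y - 1 = (x - y) / y := by field_simp
    linarith [h2 ▸ this]
  · have h1 : Real.log x ≤ Real.log y := Real.log_le_log hx h
    have h2 : 0 ≤ |x - y| / min x y :=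
      div_nonneg (abs_nonneg _) (le_min hx.le hy.le)
    linarith

open MeasureTheory in
theorem stmt_16 {α : Type*} [MeasurableSpace α] (P₁ P₂ : Measure α)
    [IsProbabilityMeasure P₁] [IsProbabilityMeasure P₂]
    (f : α → ℝ) (hf : Measurable f) (hf0 : ∀ x, 0 ≤ f x) (l : ℝ) (hl : l < 0) :
    (1 / l) * Real.log (∫ x, Real.exp (l * f x) ∂P₁) -
      (1 / l) * Real.log (∫ x, Real.exp (l * f x) ∂P₂) ≤
    (⨆ g : {g : α → ℝ // Measurable g ∧ ∀ x, |g x| ≤ 1},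
        |(∫ x, g.1 x ∂P₁) - ∫ x, g.1 x ∂P₂|) /
      (|l| * min (∫ x, Real.exp (l * f x) ∂P₁) (∫ x, Real.exp (l * f x) ∂P₂)) := by
  set g : α → ℝ := fun x => Real.exp (l * f x) with hg
  have hg_meas : Measurable g := (hf.const_mul l).exp
  have hg_pos : ∀ x, 0 < g x := fun x => Real.exp_pos _
  have hg_le1 : ∀ x, |g x| ≤ 1 := by
    intro x
    rw [abs_of_pos (hg_pos x)]
    exact Real.exp_le_one_iff.2 (mul_nonpos_of_nonpos_of_nonneg hl.le (hf0 x))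
  have hint : ∀ (P : Measure α) [IsProbabilityMeasure P], Integrable g P := by
    intro P _
    exact (integrable_const (1:ℝ)).mono' hg_meas.aestronglyMeasurable
      (ae_of_all _ fun x => by rw [Real.norm_eq_abs]; exact hg_le1 x)
  have hpos : ∀ (P : Measure α) [IsProbabilityMeasure P], 0 < ∫ x, g x ∂P := by
    intro P _
    rw [integral_pos_iff_support_of_nonneg (fun x => (hg_pos x).le) (hint P)]
    have : Function.support g = Set.univ :=
      Set.eq_univ_of_forall fun x => (hg_pos x).ne'
    simp [this]
  set I₁ := ∫ x, g x ∂P₁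
  set I₂ := ∫ x, g x ∂P₂
  have hI₁ : 0 < I₁ := hpos P₁
  have hI₂ : 0 < I₂ := hpos P₂
  set S := ⨆ g : {g : α → ℝ // Measurable g ∧ ∀ x, |g x| ≤ 1},
      |(∫ x, g.1 x ∂P₁) - ∫ x, g.1 x ∂P₂| with hS
  have hbdd : BddAbove (Set.range fun g : {g : α → ℝ // Measurable g ∧ ∀ x, |g x| ≤ 1} =>
      |(∫ x, g.1 x ∂P₁) - ∫ x, g.1 x ∂P₂|) := by
    refine ⟨2, ?_⟩
    rintro _ ⟨⟨h, hm, hb⟩, rfl⟩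
    have b1 : |∫ x, h x ∂P₁| ≤ 1 := by
      have := norm_integral_le_of_norm_le_const (μ := P₁) (f := h) (C := 1)
        (ae_of_all _ fun x => by rw [Real.norm_eq_abs]; exact hb x)
      simpa using this
    have b2 : |∫ x, h x ∂P₂| ≤ 1 := by
      have := norm_integral_le_of_norm_le_const (μ := P₂) (f := h) (C := 1)
        (ae_of_all _ fun x => by rw [Real.norm_eq_abs]; exact hb x)
      simpa using this
    calc |(∫ x, h x ∂P₁) - ∫ x, h x ∂P₂| ≤ |∫ x, h x ∂P₁| + |∫ x, h x ∂P₂| :=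
          abs_sub _ _
      _ ≤ 2 := by linarith
  have hle : |I₂ - I₁| ≤ S := by
    have := le_ciSup hbdd ⟨g, hg_meas, hg_le1⟩
    rwa [abs_sub_comm]
  have key : Real.log I₂ - Real.log I₁ ≤ S / min I₁ I₂ := by
    calc Real.log I₂ - Real.log I₁ ≤ |I₂ - I₁| / min I₂ I₁ :=
          log_sub_log_le_abs_div_min hI₂ hI₁
      _ ≤ S / min I₁ I₂ := by
          rw [min_comm I₂ I₁]
          gcongr
  have hnl : 0 < -l := neg_pos.2 hl
  have lhs_eq : (1 / l) * Real.log I₁ - (1 / l) * Real.log I₂ =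
      (Real.log I₂ - Real.log I₁) / (-l) := by
    rw [eq_div_iff (by linarith : (-l) ≠ 0)]
    field_simp [hl.ne]
    ring
  rw [lhs_eq, abs_of_neg hl]
  calc (Real.log I₂ - Real.log I₁) / (-l) ≤ (S / min I₁ I₂) / (-l) := by gcongr
    _ = S / (-l * min I₁ I₂) := by
        rw [div_div, mul_comm]
end
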